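/- Let π: Σ_h → S² be a 2-fold branched covering of a closed genus h surface over the sphere, branched over a set B of 2h+2 points, and let γ ⊂ Σ_h be an embedded closed curve invariant under the covering involution ι. Then either (a) π(γ) is an embedded arc with endpoints on B and interior disjoint from B, and π restricted to γ is a 2-fold cover branched over the two endpoints, or (b) π(γ) is an embedded circle disjoint from B and π restricted to γ is an unbranched 2-fold cover. -/
import Mathlib


open scoped Topology

/-- The closed unit interval, as a model for embedded arcs. -/
def UnitInt : Set ℝ := Set.Icc 0 1

def UnitInt.zero : UnitInt := ⟨0, le_refl 0, zero_le_one⟩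
def UnitInt.one : UnitInt := ⟨1, zero_le_one, le_refl 1⟩

/-- A subset of a topological space is an embedded circle if (it is closed and)
it is homeomorphic to the standard circle `ℝ/ℤ`. -/
def IsEmbeddedCircle {X : Type*} [TopologicalSpace X] (s : Set X) : Prop :=
  IsClosed s ∧ Nonempty (s ≃ₜ AddCircle (1 : ℝ))

open Set Function

noncomputable section CurveLiftAux

abbrev C1 := AddCircle (1 : ℝ)

noncomputable def repC (x : C1) : ℝ := (AddCircle.equivIco 1 0 x : ℝ)

lemma repC_mem (x : C1) : repC x ∈ Set.Ico (0:ℝ) 1 := by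
  have := (AddCircle.equivIco 1 0 x).2
  simpa [repC] using this

lemma mk_repC (x : C1) : ((repC x : ℝ) : C1) = x := by
  exact (AddCircle.equivIco 1 0).symm_apply_apply x

lemma repC_mk {t : ℝ} (ht : t ∈ Set.Ico (0:ℝ) 1) : repC ((t : ℝ) : C1) = t := by
  have h1 : ((repC ((t:ℝ):C1) : ℝ) : C1) = ((t:ℝ):C1) := mk_repC _
  have h2 := repC_mem ((t:ℝ):C1)
  rwa [AddCircle.coe_eq_coe_iff_of_mem_Ico
    (show _ ∈ Set.Ico (0:ℝ) (0+1) by rw [zero_add]; exact h2)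
    (show _ ∈ Set.Ico (0:ℝ) (0+1) by rw [zero_add]; exact ht)] at h1

lemma mkC_inj {s t : ℝ} (hs : s ∈ Set.Ico (0:ℝ) 1) (ht : t ∈ Set.Ico (0:ℝ) 1)
    (h : ((s:ℝ):C1) = t) : s = t := by
  rwa [AddCircle.coe_eq_coe_iff_of_mem_Ico
    (show _ ∈ Set.Ico (0:ℝ) (0+1) by rw [zero_add]; exact hs)
    (show _ ∈ Set.Ico (0:ℝ) (0+1) by rw [zero_add]; exact ht)] at h

lemma mkC_eq_zero {t : ℝ} (ht : t ∈ Set.Ico (0:ℝ) 1) : ((t:ℝ):C1) = 0 ↔ t = 0 :=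
  AddCircle.coe_eq_zero_iff_of_mem_Ico ht

lemma continuousAt_repC {x : C1} (hx : x ≠ 0) : ContinuousAt repC x := by
  have h := AddCircle.continuousAt_equivIco (1:ℝ) (0:ℝ) (x := x) (by simpa using hx)
  exact continuousAt_subtype_val.comp h

lemma continuous_mkC : Continuous (fun t : ℝ => ((t:ℝ):C1)) :=
  AddCircle.continuous_mk' 1

lemma infinite_C1 : Infinite C1 := by
  haveI : Infinite (Set.Ico (0:ℝ) (0+1)) :=
    Set.infinite_coe_iff.mpr (Set.Ico_infinite (by norm_num))
  have hinj : Function.Injective ⇑(AddCircle.equivIco (1:ℝ) 0).symm :=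
    (AddCircle.equivIco (1:ℝ) 0).symm.injective
  exact Infinite.of_injective _ hinj

/-- Two continuous surjections from a compact space to Hausdorff spaces with the same
fibers induce a homeomorphism between the targets. -/
lemma quotHomeo {X Y Z : Type*} [TopologicalSpace X] [TopologicalSpace Y] [TopologicalSpace Z]
    [CompactSpace X] [T2Space Y] [T2Space Z]
    (f : X → Y) (g : X → Z) (hfc : Continuous f) (hgc : Continuous g)
    (hfs : Surjective f) (hgs : Surjective g)
    (hfg : ∀ a b, f a = f b ↔ g a = g b) :
    ∃ e : Y ≃ₜ Z, ∀ x, e (f x) = g x := by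
  have hfq : Topology.IsQuotientMap f := (hfc.isClosedMap).isQuotientMap hfc hfs
  have hgq : Topology.IsQuotientMap g := (hgc.isClosedMap).isQuotientMap hgc hgs
  let F : Y → Z := fun y => g (surjInv hfs y)
  let G : Z → Y := fun z => f (surjInv hgs z)
  have hF : ∀ x, F (f x) = g x := fun x => (hfg _ _).mp (surjInv_eq hfs (f x))
  have hG : ∀ x, G (g x) = f x := fun x => (hfg _ _).mpr (surjInv_eq hgs (g x))
  have hFc : Continuous F := by
    rw [hfq.continuous_iff]
    have : F ∘ f = g := funext hF
    rw [this]; exact hgc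
  have hGc : Continuous G := by
    rw [hgq.continuous_iff]
    have : G ∘ g = f := funext hG
    rw [this]; exact hfc
  refine ⟨⟨⟨F, G, ?_, ?_⟩, hFc, hGc⟩, hF⟩
  · intro y; obtain ⟨x, rfl⟩ := hfs y
    rw [hF, hG]
  · intro z; obtain ⟨x, rfl⟩ := hgs z
    rw [hG, hF]

lemma continuousAt_Gaux (f : C1 ≃ₜ C1) {t : ℝ} (h : f ((t:ℝ):C1) ≠ 0) :
    ContinuousAt (fun u : ℝ => repC (f ((u:ℝ):C1))) t := by
  have hc1 : ContinuousAt (fun u : ℝ => ((u:ℝ):C1)) t := continuous_mkC.continuousAt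
  have hc2 : ContinuousAt (⇑f) (((t:ℝ):C1)) := f.continuous.continuousAt
  have hc3 : ContinuousAt repC (f ((t:ℝ):C1)) := continuousAt_repC h
  exact (hc3.comp hc2).comp hc1

lemma fixedCase (f : C1 ≃ₜ C1) (hinv : ∀ x, f (f x) = x) (h0 : f 0 = 0)
    (hne : ∃ c : C1, f c ≠ c) :
    ∃ q ∈ Set.Ioo (0:ℝ) 1, f ((q:ℝ):C1) = ((q:ℝ):C1) ∧
      (∀ t ∈ Set.Ioo 0 q, repC (f ((t:ℝ):C1)) ∈ Set.Ioo q 1) ∧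
      (∀ t ∈ Set.Ioo q 1, repC (f ((t:ℝ):C1)) ∈ Set.Ioo 0 q) := by
  set G : ℝ → ℝ := fun t => repC (f ((t:ℝ):C1)) with hGdef
  have hmkG : ∀ t : ℝ, ((G t : ℝ):C1) = f ((t:ℝ):C1) := fun t => mk_repC _
  have hne0 : ∀ t ∈ Set.Ioo (0:ℝ) 1, ((t:ℝ):C1) ≠ 0 := by
    intro t ht h
    exact ht.1.ne' ((mkC_eq_zero (Set.Ioo_subset_Ico_self ht)).mp h)
  have hfne0 : ∀ t ∈ Set.Ioo (0:ℝ) 1, f ((t:ℝ):C1) ≠ 0 := by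
    intro t ht h
    apply hne0 t ht
    have h2 := congrArg f h
    rwa [hinv, h0] at h2
  have hGmem : ∀ t ∈ Set.Ioo (0:ℝ) 1, G t ∈ Set.Ioo (0:ℝ) 1 := by
    intro t ht
    have h1 := repC_mem (f ((t:ℝ):C1))
    refine ⟨lt_of_le_of_ne h1.1 ?_, h1.2⟩
    intro h
    apply hfne0 t ht
    rw [← hmkG t, ← h]
    norm_num
  have hGG : ∀ t ∈ Set.Ico (0:ℝ) 1, G (G t) = t := by
    intro t ht
    have h1 : ((G (G t) : ℝ):C1) = ((t:ℝ):C1) := by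
      rw [hmkG, hmkG, hinv]
    exact mkC_inj (repC_mem _) ht h1
  have hGcont : ContinuousOn G (Set.Ioo 0 1) := by
    intro t ht
    exact (continuousAt_Gaux f (hfne0 t ht)).continuousWithinAt
  have hGinj : Set.InjOn G (Set.Ioo 0 1) := by
    intro s hs t ht h
    rw [← hGG s (Set.Ioo_subset_Ico_self hs), ← hGG t (Set.Ioo_subset_Ico_self ht), h]
  rcases ContinuousOn.strictMonoOn_of_injOn_Ioo one_pos hGcont hGinj with hmono | hanti
  · exfalso
    obtain ⟨c, hc⟩ := hne
    apply hc
    have hr := repC_mem c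
    rcases eq_or_lt_of_le hr.1 with h0c | h0c
    · have hc0 : c = 0 := by
        rw [← mk_repC c, ← h0c]; norm_num
      rw [hc0, h0]
    · have htt : repC c ∈ Set.Ioo (0:ℝ) 1 := ⟨h0c, hr.2⟩
      have hfix : G (repC c) = repC c := by
        rcases lt_trichotomy (G (repC c)) (repC c) with h | h | h
        · have h2 := hmono (hGmem _ htt) htt h
          rw [hGG _ (Set.Ioo_subset_Ico_self htt)] at h2
          exact absurd h2 (not_lt.mpr h.le)
        · exact h
        · have h2 := hmono htt (hGmem _ htt) h
          rw [hGG _ (Set.Ioo_subset_Ico_self htt)] at h2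
          exact absurd h2 (not_lt.mpr h.le)
      calc f c = f ((repC c : ℝ):C1) := by rw [mk_repC]
        _ = ((G (repC c):ℝ):C1) := (hmkG _).symm
        _ = ((repC c:ℝ):C1) := by rw [hfix]
        _ = c := mk_repC c
  · have IVT : ∀ s : ℝ, s ∈ Set.Ioo (0:ℝ) 1 → G s ∈ Set.Ioo (0:ℝ) 1 →
        ∃ q ∈ Set.Ioo (0:ℝ) 1, G q = q := by
      intro s hs hGs
      have hsub : Set.uIcc s (G s) ⊆ Set.Ioo (0:ℝ) 1 :=
        (Set.ordConnected_Ioo).uIcc_subset hs hGs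
      have hcont : ContinuousOn (fun u => G u - u) (Set.uIcc s (G s)) :=
        (hGcont.mono hsub).sub continuousOn_id
      have hGGs : G (G s) = s := hGG s (Set.Ioo_subset_Ico_self hs)
      have h0m : (0:ℝ) ∈ Set.uIcc ((fun u => G u - u) s) ((fun u => G u - u) (G s)) := by
        simp only [hGGs]
        rcases le_total (G s - s) 0 with h | h
        · exact Set.mem_uIcc.mpr (Or.inl ⟨h, by linarith⟩)
        · exact Set.mem_uIcc.mpr (Or.inr ⟨by linarith, h⟩)
      obtain ⟨q, hq, hq0⟩ := intermediate_value_uIcc hcont h0m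
      exact ⟨q, hsub hq, by dsimp at hq0; linarith⟩
    obtain ⟨q, hqI, hqfix⟩ : ∃ q ∈ Set.Ioo (0:ℝ) 1, G q = q := by
      have ht0 : (1/2:ℝ) ∈ Set.Ioo (0:ℝ) 1 := by norm_num
      rcases eq_or_ne (G (1/2)) (1/2) with h | h
      · exact ⟨1/2, ht0, h⟩
      · exact IVT (1/2) ht0 (hGmem _ ht0)
    refine ⟨q, hqI, ?_, ?_, ?_⟩
    · rw [← hmkG, hqfix]
    · intro t ht
      have htI : t ∈ Set.Ioo (0:ℝ) 1 := ⟨ht.1, ht.2.trans hqI.2⟩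
      refine ⟨?_, (hGmem t htI).2⟩
      have h2 := hanti htI hqI ht.2
      rwa [hqfix] at h2
    · intro t ht
      have htI : t ∈ Set.Ioo (0:ℝ) 1 := ⟨hqI.1.trans ht.1, ht.2⟩
      refine ⟨(hGmem t htI).1, ?_⟩
      have h2 := hanti hqI htI ht.1
      rwa [hqfix] at h2

lemma freeCase (f : C1 ≃ₜ C1) (hinv : ∀ x, f (f x) = x) (hfree : ∀ c : C1, f c ≠ c) :
    ∃ a ∈ Set.Ioo (0:ℝ) 1, f 0 = ((a:ℝ):C1) ∧ f ((a:ℝ):C1) = 0 ∧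
      (∀ t ∈ Set.Ioo 0 a, repC (f ((t:ℝ):C1)) ∈ Set.Ioo a 1) ∧
      (∀ t ∈ Set.Ioo a 1, repC (f ((t:ℝ):C1)) ∈ Set.Ioo 0 a) := by
  set a : ℝ := repC (f 0) with hadef
  have hmka : ((a:ℝ):C1) = f 0 := mk_repC _
  have haIco := repC_mem (f 0)
  have ha0 : a ≠ 0 := by
    intro h
    apply hfree 0
    rw [← hmka, h]; norm_num
  have haI : a ∈ Set.Ioo (0:ℝ) 1 := ⟨lt_of_le_of_ne haIco.1 (Ne.symm ha0), haIco.2⟩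
  have hfa : f ((a:ℝ):C1) = 0 := by
    rw [hmka, hinv]
  set G : ℝ → ℝ := fun t => repC (f ((t:ℝ):C1)) with hGdef
  have hmkG : ∀ t : ℝ, ((G t : ℝ):C1) = f ((t:ℝ):C1) := fun t => mk_repC _
  have hfne0 : ∀ u ∈ Set.Ioo (0:ℝ) 1, u ≠ a → f ((u:ℝ):C1) ≠ 0 := by
    intro u hu hua h
    apply hua
    have h2 := congrArg f h
    rw [hinv, ← hmka] at h2
    exact mkC_inj (Set.Ioo_subset_Ico_self hu) haIco h2
  have hGG : ∀ t ∈ Set.Ico (0:ℝ) 1, G (G t) = t := by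
    intro t ht
    have h1 : ((G (G t) : ℝ):C1) = ((t:ℝ):C1) := by
      rw [hmkG, hmkG, hinv]
    exact mkC_inj (repC_mem _) ht h1
  have hGmem : ∀ t ∈ Set.Ioo (0:ℝ) 1, t ≠ a → (G t ∈ Set.Ioo (0:ℝ) 1 ∧ G t ≠ a) := by
    intro t ht hta
    have h1 := repC_mem (f ((t:ℝ):C1))
    constructor
    · refine ⟨lt_of_le_of_ne h1.1 ?_, h1.2⟩
      intro h
      apply hfne0 t ht hta
      rw [← hmkG t, ← h]; norm_num
    · intro h
      have h2 : ((G t:ℝ):C1) = ((a:ℝ):C1) := by rw [h]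
      rw [hmkG, hmka] at h2
      have h3 := congrArg f h2
      rw [hinv, hinv] at h3
      have h4 : t = 0 := (mkC_eq_zero (Set.Ioo_subset_Ico_self ht)).mp h3
      exact ht.1.ne' h4
  have noFix : ∀ t ∈ Set.Ioo (0:ℝ) 1, G t ≠ t := by
    intro t ht h
    apply hfree ((t:ℝ):C1)
    rw [← hmkG, h]
  have key : ∀ lo hi : ℝ, Set.Ioo lo hi ⊆ Set.Ioo (0:ℝ) 1 → a ∉ Set.Ioo lo hi →
      ∀ t ∈ Set.Ioo lo hi, G t ∉ Set.Ioo lo hi := by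
    intro lo hi hsub ha t ht hGt
    have hIcc : Set.uIcc t (G t) ⊆ Set.Ioo lo hi :=
      (Set.ordConnected_Ioo).uIcc_subset ht hGt
    have hcont : ContinuousOn (fun u => G u - u) (Set.uIcc t (G t)) := by
      intro u hu
      have huI := hsub (hIcc hu)
      have hua : u ≠ a := fun h => ha (h ▸ hIcc hu)
      exact ((continuousAt_Gaux f (hfne0 u huI hua)).sub continuousAt_id).continuousWithinAt
    have hGGt : G (G t) = t := hGG t (Set.Ioo_subset_Ico_self (hsub ht))
    have h0m : (0:ℝ) ∈ Set.uIcc ((fun u => G u - u) t) ((fun u => G u - u) (G t)) := by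
      simp only [hGGt]
      rcases le_total (G t - t) 0 with h | h
      · exact Set.mem_uIcc.mpr (Or.inl ⟨h, by linarith⟩)
      · exact Set.mem_uIcc.mpr (Or.inr ⟨by linarith, h⟩)
    obtain ⟨s, hs, hs0⟩ := intermediate_value_uIcc hcont h0m
    refine noFix s (hsub (hIcc hs)) ?_
    dsimp at hs0; linarith
  refine ⟨a, haI, hmka.symm, hfa, ?_, ?_⟩
  · intro t ht
    have htI : t ∈ Set.Ioo (0:ℝ) 1 := ⟨ht.1, ht.2.trans haI.2⟩
    have hta : t ≠ a := ht.2.ne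
    obtain ⟨hG1, hGa⟩ := hGmem t htI hta
    have hnot := key 0 a (fun u hu => ⟨hu.1, hu.2.trans haI.2⟩) (fun h => lt_irrefl a h.2) t ht
    rcases lt_trichotomy (G t) a with h | h | h
    · exact absurd ⟨hG1.1, h⟩ hnot
    · exact absurd h hGa
    · exact ⟨h, hG1.2⟩
  · intro t ht
    have htI : t ∈ Set.Ioo (0:ℝ) 1 := ⟨haI.1.trans ht.1, ht.2⟩
    have hta : t ≠ a := ht.1.ne'
    obtain ⟨hG1, hGa⟩ := hGmem t htI hta
    have hnot := key a 1 (fun u hu => ⟨haI.1.trans hu.1, hu.2⟩) (fun h => lt_irrefl a h.1) t ht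
    rcases lt_trichotomy (G t) a with h | h | h
    · exact ⟨hG1.1, h⟩
    · exact absurd h hGa
    · exact absurd ⟨h, hG1.2⟩ hnot

end CurveLiftAux


/-- Lemma 1, `curvelift`.
Let `π : Σ_h → S²` be the 2-fold branched covering given as the quotient of the
hyperelliptic involution `ι` (so the fibers of `π` are exactly the `ι`-orbits),
branched over the set `B` of `2h+2` images of fixed points of `ι`.  If
`γ ⊆ Σ_h` is an embedded closed curve invariant under `ι`, then either
(a) `π(γ)` is an embedded arc with endpoints on `B`, interior disjoint from `B`,
and `π` restricted to `γ` is a 2-fold cover branched over the two endpoints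
(one preimage point over each endpoint, two over every other point); or
(b) `π(γ)` is an embedded circle disjoint from `B` and `π` restricted to `γ` is
an unbranched 2-fold cover (two preimage points over every point). -/
theorem stmt_1 {Sh S2 : Type*} [TopologicalSpace Sh] [TopologicalSpace S2]
    [CompactSpace Sh] [T2Space Sh] [CompactSpace S2] [T2Space S2]
    [ConnectedSpace Sh] [ConnectedSpace S2]
    (h : ℕ) (ι : Sh ≃ₜ Sh) (hinv : ∀ x, ι (ι x) = x)
    (π : C(Sh, S2)) (hsurj : Function.Surjective π)
    (hquot : Topology.IsQuotientMap ⇑π)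
    (hfib : ∀ x y : Sh, π x = π y ↔ (y = x ∨ y = ι x))
    (B : Set S2) (hB : B = π '' {x | ι x = x}) (hBcard : B.ncard = 2 * h + 2)
    (γ : Set Sh) (hγ : IsEmbeddedCircle γ) (hsym : ι '' γ = γ) :
    (∃ e : UnitInt ≃ₜ (π '' γ : Set S2),
      ((e UnitInt.zero : S2) ∈ B ∧ (e UnitInt.one : S2) ∈ B) ∧
      (∀ t : UnitInt, t ≠ UnitInt.zero → t ≠ UnitInt.one → (e t : S2) ∉ B) ∧
      (∀ z ∈ π '' γ,
        (z ∈ B → (γ ∩ (⇑π) ⁻¹' {z}).ncard = 1) ∧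
        (z ∉ B → (γ ∩ (⇑π) ⁻¹' {z}).ncard = 2)))
    ∨ (IsEmbeddedCircle (π '' γ) ∧ Disjoint (π '' γ) B ∧
        ∀ z ∈ π '' γ, (γ ∩ (⇑π) ⁻¹' {z}).ncard = 2) := by
  classical
  obtain ⟨hγcl, ⟨e0⟩⟩ := hγ
  have hπι : ∀ x, π (ι x) = π x := fun x => (hfib (ι x) x).mpr (Or.inr (hinv x).symm)
  have hγι : ∀ x ∈ γ, ι x ∈ γ := by
    intro x hx
    rw [← hsym]; exact ⟨x, hx, rfl⟩
  have hmemB : ∀ x : Sh, (π x ∈ B ↔ ι x = x) := by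
    intro x
    constructor
    · intro hxB
      rw [hB] at hxB
      obtain ⟨w, hw, hwx⟩ := hxB
      rcases (hfib w x).mp hwx with rfl | rfl
      · exact hw
      · rw [hinv]
        exact hw.symm
    · intro hx
      rw [hB]; exact ⟨x, hx, rfl⟩
  have hfibset : ∀ x ∈ γ, γ ∩ ⇑π ⁻¹' {π x} = {x, ι x} := by
    intro x hx
    ext y
    simp only [Set.mem_inter_iff, Set.mem_preimage, Set.mem_singleton_iff, Set.mem_insert_iff]
    constructor
    · rintro ⟨hy, hyz⟩
      exact (hfib x y).mp hyz.symm
    · rintro (rfl | rfl)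
      · exact ⟨hx, rfl⟩
      · exact ⟨hγι x hx, hπι x⟩
  have hcount : ∀ z ∈ π '' γ,
      (z ∈ B → (γ ∩ ⇑π ⁻¹' {z}).ncard = 1) ∧ (z ∉ B → (γ ∩ ⇑π ⁻¹' {z}).ncard = 2) := by
    rintro z ⟨x, hx, rfl⟩
    rw [hfibset x hx]
    constructor
    · intro hzB
      rw [(hmemB x).mp hzB]
      simp
    · intro hzB
      have hne : x ≠ ι x := fun hh => hzB ((hmemB x).mpr hh.symm)
      exact Set.ncard_pair hne
  let σ : ↥γ ≃ₜ ↥γ := (ι.image γ).trans (Homeomorph.setCongr hsym)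
  have hσcoe : ∀ y : ↥γ, ((σ y : ↥γ) : Sh) = ι (y : Sh) := fun y => rfl
  have hσinv : ∀ y, σ (σ y) = y := by
    intro y; apply Subtype.ext
    rw [hσcoe, hσcoe, hinv]
  have hBfin : B.Finite := by
    by_contra hinf
    have h0 : B.ncard = 0 := Set.Infinite.ncard hinf
    omega
  haveI : Infinite C1 := infinite_C1
  have hγinf : γ.Infinite := by
    rw [← Set.infinite_coe_iff]
    exact Infinite.of_injective ⇑e0.symm e0.symm.injective
  by_cases hid : ∀ y : ↥γ, σ y = y
  · exfalso
    have hsub : π '' γ ⊆ B := by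
      rintro z ⟨x, hx, rfl⟩
      apply (hmemB x).mpr
      have h1 := congrArg Subtype.val (hid ⟨x, hx⟩)
      rwa [hσcoe] at h1
    have hπinj : Set.InjOn ⇑π γ := by
      intro x hx y hy hxy
      rcases (hfib x y).mp hxy with h1 | h1
      · exact h1.symm
      · have h2 := congrArg Subtype.val (hid ⟨x, hx⟩)
        rw [hσcoe] at h2
        rw [h1, h2]
    exact hγinf (Set.Finite.of_finite_image (hBfin.subset hsub) hπinj)
  · push_neg at hid
    obtain ⟨y0, hy0⟩ := hid
    by_cases hfix : ∃ c : C1, ((e0.symm.trans σ).trans e0) c = c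
    · -- CASE (a) : arc
      obtain ⟨c, hc⟩ := hfix
      let e : ↥γ ≃ₜ C1 := e0.trans (Homeomorph.addLeft (-c))
      let f : C1 ≃ₜ C1 := (e.symm.trans σ).trans e
      have hfinv : ∀ x, f (f x) = x := by
        intro x
        show e (σ (e.symm (e (σ (e.symm x))))) = x
        rw [Homeomorph.symm_apply_apply, hσinv, Homeomorph.apply_symm_apply]
      have hsymmf : ∀ x, e.symm (f x) = σ (e.symm x) := by
        intro x
        show e.symm (e (σ (e.symm x))) = σ (e.symm x)
        rw [Homeomorph.symm_apply_apply]
      have hf0 : f 0 = 0 := by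
        show e (σ (e.symm 0)) = 0
        have h1 : e.symm 0 = e0.symm c := by
          apply e.injective
          rw [Homeomorph.apply_symm_apply]
          show (0:C1) = -c + e0 (e0.symm c)
          rw [Homeomorph.apply_symm_apply]
          exact (neg_add_cancel c).symm
        rw [h1]
        show -c + e0 (σ (e0.symm c)) = 0
        have h2 : e0 (σ (e0.symm c)) = c := hc
        rw [h2]
        exact neg_add_cancel c
      have hfneid : ∃ x, f x ≠ x := by
        refine ⟨e y0, fun hh => hy0 ?_⟩
        have h1 : e.symm (f (e y0)) = e.symm (e y0) := by rw [hh]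
        rw [hsymmf, Homeomorph.symm_apply_apply] at h1
        exact h1
      obtain ⟨q, hqI, hfq, hswap1, hswap2⟩ := fixedCase f hfinv hf0 hfneid
      have hq0 : q ≠ 0 := hqI.1.ne'
      have hππ : ∀ x y : C1,
          (π ((e.symm x : ↥γ):Sh) = π ((e.symm y : ↥γ):Sh)) ↔ (y = x ∨ y = f x) := by
        intro x y
        rw [hfib]
        have h1 : (((e.symm y : ↥γ):Sh) = ((e.symm x : ↥γ):Sh)) ↔ y = x := by
          rw [Subtype.coe_inj]
          exact ⟨fun hh => e.symm.injective hh, fun hh => by rw [hh]⟩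
        have h2 : (((e.symm y : ↥γ):Sh) = ι ((e.symm x : ↥γ):Sh)) ↔ y = f x := by
          rw [← hσcoe, ← hsymmf, Subtype.coe_inj]
          exact ⟨fun hh => e.symm.injective hh, fun hh => by rw [hh]⟩
        rw [h1, h2]
      have hπe : ∀ x : C1, π ((e.symm (f x) : ↥γ) : Sh) = π ((e.symm x : ↥γ) : Sh) := by
        intro x
        rw [hsymmf, hσcoe]
        exact hπι _
      have hfixB : ∀ x : C1, f x = x → π ((e.symm x : ↥γ):Sh) ∈ B := by
        intro x hx
        apply (hmemB _).mpr
        rw [← hσcoe, ← hsymmf, hx]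
      have hnfixB : ∀ x : C1, f x ≠ x → π ((e.symm x : ↥γ):Sh) ∉ B := by
        intro x hx hB'
        apply hx
        have h2 : ι ((e.symm x : ↥γ):Sh) = ((e.symm x : ↥γ):Sh) := (hmemB _).mp hB'
        rw [← hσcoe, ← hsymmf, Subtype.coe_inj] at h2
        exact e.symm.injective h2
      -- the two quotient maps from the arc [0, q]
      let f1 : ↥(Set.Icc (0:ℝ) q) → ↥UnitInt := fun t =>
        ⟨(t:ℝ)/q, div_nonneg t.2.1 hqI.1.le, (div_le_one hqI.1).mpr t.2.2⟩
      let f2 : ↥(Set.Icc (0:ℝ) q) → ↥(π '' γ) := fun t =>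
        ⟨π ((e.symm (((t:ℝ):C1)) : ↥γ):Sh), ⟨_, (e.symm (((t:ℝ):C1))).2, rfl⟩⟩
      have hf2val : ∀ t, ((f2 t : ↥(π '' γ)) : S2) = π ((e.symm (((t:ℝ):C1)) : ↥γ):Sh) :=
        fun t => rfl
      have hf1c : Continuous f1 := by
        apply Continuous.subtype_mk
        exact continuous_subtype_val.div_const q
      have hf2c : Continuous f2 := by
        apply Continuous.subtype_mk
        exact π.continuous.comp (continuous_subtype_val.comp
          (e.symm.continuous.comp (continuous_mkC.comp continuous_subtype_val)))
      have hf1surj : Function.Surjective f1 := by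
        rintro ⟨u, hu0, hu1⟩
        refine ⟨⟨u * q, mul_nonneg hu0 hqI.1.le, ?_⟩, ?_⟩
        · calc u * q ≤ 1 * q := by nlinarith [hqI.1]
            _ = q := one_mul q
        · apply Subtype.ext
          show u * q / q = u
          rw [mul_div_cancel_right₀ u hq0]
      have hf2surj : Function.Surjective f2 := by
        rintro ⟨z, x, hx, rfl⟩
        have hex : e.symm (e ⟨x, hx⟩) = ⟨x, hx⟩ := Homeomorph.symm_apply_apply _ _
        have hrep := repC_mem (e ⟨x, hx⟩)
        rcases le_or_gt (repC (e ⟨x, hx⟩)) q with hle | hlt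
        · refine ⟨⟨repC (e ⟨x, hx⟩), hrep.1, hle⟩, ?_⟩
          apply Subtype.ext
          rw [hf2val]
          show π _ = π x
          rw [mk_repC, hex]
        · have hIoo : repC (e ⟨x, hx⟩) ∈ Set.Ioo q 1 := ⟨hlt, hrep.2⟩
          have hs := hswap2 _ hIoo
          refine ⟨⟨repC (f (((repC (e ⟨x, hx⟩):ℝ)):C1)), hs.1.le, hs.2.le⟩, ?_⟩
          apply Subtype.ext
          rw [hf2val]
          show π _ = π x
          rw [mk_repC, hπe, mk_repC, hex]
      have hf2fib : ∀ a b : ↥(Set.Icc (0:ℝ) q), (f2 a = f2 b) ↔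
          ((((b:ℝ):C1) = (((a:ℝ)):C1)) ∨ (((b:ℝ):C1) = f (((a:ℝ):C1)))) := by
        intro a b
        rw [Subtype.ext_iff, hf2val, hf2val]
        exact hππ _ _
      have hsubIco : ∀ t : ↥(Set.Icc (0:ℝ) q), (t:ℝ) ∈ Set.Ico (0:ℝ) 1 :=
        fun t => ⟨t.2.1, lt_of_le_of_lt t.2.2 hqI.2⟩
      have harc : ∀ a b : ↥(Set.Icc (0:ℝ) q),
          ((((b:ℝ):C1) = (((a:ℝ)):C1)) ∨ (((b:ℝ):C1) = f (((a:ℝ):C1)))) ↔ a = b := by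
        intro a b
        constructor
        · rintro (hh | hh)
          · exact (Subtype.ext (mkC_inj (hsubIco b) (hsubIco a) hh)).symm
          · rcases eq_or_lt_of_le a.2.1 with h0 | h0
            · have ha0 : (((a:ℝ)):C1) = (0:C1) := by rw [← h0]; norm_num
              rw [ha0, hf0] at hh
              have hb0 : (b:ℝ) = 0 := (mkC_eq_zero (hsubIco b)).mp hh
              apply Subtype.ext
              rw [hb0, ← h0]
            · rcases eq_or_lt_of_le a.2.2 with hq' | hq'
              · rw [hq', hfq] at hh
                have hbq : (b:ℝ) = q := mkC_inj (hsubIco b) ⟨hqI.1.le, hqI.2⟩ hh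
                apply Subtype.ext
                rw [hbq, hq']
              · exfalso
                have hs := hswap1 (a:ℝ) ⟨h0, hq'⟩
                have hmk : (((b:ℝ)):C1) = ((repC (f (((a:ℝ):C1))) : ℝ):C1) := by
                  rw [mk_repC]; exact hh
                have hbeq : (b:ℝ) = repC (f (((a:ℝ):C1))) :=
                  mkC_inj (hsubIco b) (repC_mem _) hmk
                have : (b:ℝ) ≤ q := b.2.2
                rw [hbeq] at this
                exact absurd this (not_le.mpr hs.1)
        · rintro rfl
          exact Or.inl rfl
      have hmatch : ∀ a b, f1 a = f1 b ↔ f2 a = f2 b := by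
        intro a b
        rw [hf2fib a b, harc a b]
        constructor
        · intro hh
          have h1 : (a:ℝ)/q = (b:ℝ)/q := congrArg Subtype.val hh
          apply Subtype.ext
          field_simp at h1
          exact h1
        · rintro rfl; rfl
      obtain ⟨E, hE⟩ := quotHomeo f1 f2 hf1c hf2c hf1surj hf2surj hmatch
      refine Or.inl ⟨E, ⟨?_, ?_⟩, ?_, hcount⟩
      · have hz : UnitInt.zero = f1 ⟨0, le_refl 0, hqI.1.le⟩ := by
          apply Subtype.ext
          show (0:ℝ) = 0 / q
          rw [zero_div]
        rw [hz, hE]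
        rw [hf2val]
        apply hfixB
        have h00 : (((0:ℝ)):C1) = (0:C1) := by norm_num
        rw [h00, hf0]
      · have hz : UnitInt.one = f1 ⟨q, hqI.1.le, le_refl q⟩ := by
          apply Subtype.ext
          show (1:ℝ) = q / q
          rw [div_self hq0]
        rw [hz, hE]
        rw [hf2val]
        exact hfixB _ hfq
      · intro t ht0 ht1
        have ht0' : (0:ℝ) < (t:ℝ) := by
          rcases eq_or_lt_of_le t.2.1 with hh | hh
          · exact absurd (Subtype.ext hh.symm : t = UnitInt.zero) ht0
          · exact hh
        have ht1' : (t:ℝ) < 1 := by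
          rcases eq_or_lt_of_le t.2.2 with hh | hh
          · exact absurd (Subtype.ext hh : t = UnitInt.one) ht1
          · exact hh
        have hsI : (t:ℝ) * q ∈ Set.Ioo (0:ℝ) q :=
          ⟨mul_pos ht0' hqI.1, by nlinarith [hqI.1]⟩
        have hz : t = f1 ⟨(t:ℝ) * q, hsI.1.le, hsI.2.le⟩ := by
          apply Subtype.ext
          show (t:ℝ) = (t:ℝ) * q / q
          rw [mul_div_cancel_right₀ _ hq0]
        rw [hz, hE, hf2val]
        apply hnfixB
        intro hfx
        have hs := hswap1 ((t:ℝ) * q) hsI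
        have h1 : (((t:ℝ) * q : ℝ):C1) = ((repC (f ((((t:ℝ) * q : ℝ)):C1)) : ℝ):C1) := by
          rw [mk_repC, hfx]
        have h2 : ((t:ℝ) * q : ℝ) = repC (f ((((t:ℝ) * q : ℝ)):C1)) :=
          mkC_inj ⟨hsI.1.le, hsI.2.trans hqI.2⟩ (repC_mem _) h1
        rw [← h2] at hs
        exact absurd hsI.2 (not_lt.mpr hs.1.le)
    · -- CASE (b) : circle
      push_neg at hfix
      let e : ↥γ ≃ₜ C1 := e0
      let f : C1 ≃ₜ C1 := (e.symm.trans σ).trans e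
      have hfree : ∀ c : C1, f c ≠ c := hfix
      have hfinv : ∀ x, f (f x) = x := by
        intro x
        show e (σ (e.symm (e (σ (e.symm x))))) = x
        rw [Homeomorph.symm_apply_apply, hσinv, Homeomorph.apply_symm_apply]
      have hsymmf : ∀ x, e.symm (f x) = σ (e.symm x) := by
        intro x
        show e.symm (e (σ (e.symm x))) = σ (e.symm x)
        rw [Homeomorph.symm_apply_apply]
      obtain ⟨a, haI, hf0a, hfa0, hswap1, hswap2⟩ := freeCase f hfinv hfree
      have ha0 : a ≠ 0 := haI.1.ne'
      have hππ : ∀ x y : C1,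
          (π ((e.symm x : ↥γ):Sh) = π ((e.symm y : ↥γ):Sh)) ↔ (y = x ∨ y = f x) := by
        intro x y
        rw [hfib]
        have h1 : (((e.symm y : ↥γ):Sh) = ((e.symm x : ↥γ):Sh)) ↔ y = x := by
          rw [Subtype.coe_inj]
          exact ⟨fun hh => e.symm.injective hh, fun hh => by rw [hh]⟩
        have h2 : (((e.symm y : ↥γ):Sh) = ι ((e.symm x : ↥γ):Sh)) ↔ y = f x := by
          rw [← hσcoe, ← hsymmf, Subtype.coe_inj]
          exact ⟨fun hh => e.symm.injective hh, fun hh => by rw [hh]⟩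
        rw [h1, h2]
      have hπe : ∀ x : C1, π ((e.symm (f x) : ↥γ) : Sh) = π ((e.symm x : ↥γ) : Sh) := by
        intro x
        rw [hsymmf, hσcoe]
        exact hπι _
      have hnfixB : ∀ x : C1, π ((e.symm x : ↥γ):Sh) ∉ B := by
        intro x hB'
        apply hfree x
        have h2 : ι ((e.symm x : ↥γ):Sh) = ((e.symm x : ↥γ):Sh) := (hmemB _).mp hB'
        rw [← hσcoe, ← hsymmf, Subtype.coe_inj] at h2
        exact e.symm.injective h2
      let f1 : ↥(Set.Icc (0:ℝ) a) → C1 := fun t => (((t:ℝ)/a : ℝ):C1)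
      let f2 : ↥(Set.Icc (0:ℝ) a) → ↥(π '' γ) := fun t =>
        ⟨π ((e.symm (((t:ℝ):C1)) : ↥γ):Sh), ⟨_, (e.symm (((t:ℝ):C1))).2, rfl⟩⟩
      have hf2val : ∀ t, ((f2 t : ↥(π '' γ)) : S2) = π ((e.symm (((t:ℝ):C1)) : ↥γ):Sh) :=
        fun t => rfl
      have hf1c : Continuous f1 :=
        continuous_mkC.comp (continuous_subtype_val.div_const a)
      have hf2c : Continuous f2 := by
        apply Continuous.subtype_mk
        exact π.continuous.comp (continuous_subtype_val.comp
          (e.symm.continuous.comp (continuous_mkC.comp continuous_subtype_val)))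
      have hf1surj : Function.Surjective f1 := by
        intro z
        have hrep := repC_mem z
        refine ⟨⟨repC z * a, mul_nonneg hrep.1 haI.1.le, ?_⟩, ?_⟩
        · calc repC z * a ≤ 1 * a := by nlinarith [haI.1, hrep.1, hrep.2]
            _ = a := one_mul a
        · show (((repC z * a)/a : ℝ):C1) = z
          rw [mul_div_cancel_right₀ _ ha0, mk_repC]
      have hf2surj : Function.Surjective f2 := by
        rintro ⟨z, x, hx, rfl⟩
        have hex : e.symm (e ⟨x, hx⟩) = ⟨x, hx⟩ := Homeomorph.symm_apply_apply _ _
        have hrep := repC_mem (e ⟨x, hx⟩)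
        rcases le_or_gt (repC (e ⟨x, hx⟩)) a with hle | hlt
        · refine ⟨⟨repC (e ⟨x, hx⟩), hrep.1, hle⟩, ?_⟩
          apply Subtype.ext
          rw [hf2val]
          show π _ = π x
          rw [mk_repC, hex]
        · have hIoo : repC (e ⟨x, hx⟩) ∈ Set.Ioo a 1 := ⟨hlt, hrep.2⟩
          have hs := hswap2 _ hIoo
          refine ⟨⟨repC (f (((repC (e ⟨x, hx⟩):ℝ)):C1)), hs.1.le, hs.2.le⟩, ?_⟩
          apply Subtype.ext
          rw [hf2val]
          show π _ = π x
          rw [mk_repC, hπe, mk_repC, hex]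
      have hf2fib : ∀ s t : ↥(Set.Icc (0:ℝ) a), (f2 s = f2 t) ↔
          ((((t:ℝ):C1) = (((s:ℝ)):C1)) ∨ (((t:ℝ):C1) = f (((s:ℝ):C1)))) := by
        intro s t
        rw [Subtype.ext_iff, hf2val, hf2val]
        exact hππ _ _
      have hsubIco : ∀ t : ↥(Set.Icc (0:ℝ) a), (t:ℝ) ∈ Set.Ico (0:ℝ) 1 :=
        fun t => ⟨t.2.1, lt_of_le_of_lt t.2.2 haI.2⟩
      have hdisj : ∀ s t : ↥(Set.Icc (0:ℝ) a),
          (((s:ℝ) = (t:ℝ)) ∨ ((s:ℝ) = 0 ∧ (t:ℝ) = a) ∨ ((s:ℝ) = a ∧ (t:ℝ) = 0)) ↔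
          ((((t:ℝ):C1) = (((s:ℝ)):C1)) ∨ (((t:ℝ):C1) = f (((s:ℝ):C1)))) := by
        intro s t
        constructor
        · rintro (hh | ⟨hs0, hta⟩ | ⟨hsa, ht0⟩)
          · exact Or.inl (by rw [hh])
          · right
            rw [hs0, hta]
            have h00 : (((0:ℝ)):C1) = (0:C1) := by norm_num
            rw [h00, hf0a]
          · right
            rw [hsa, ht0, hfa0]
            norm_num
        · rintro (hh | hh)
          · exact Or.inl (mkC_inj (hsubIco t) (hsubIco s) hh).symm
          · rcases eq_or_lt_of_le s.2.1 with h0 | h0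
            · have hs0 : (((s:ℝ)):C1) = (0:C1) := by rw [← h0]; norm_num
              rw [hs0, hf0a] at hh
              have hta : (t:ℝ) = a := mkC_inj (hsubIco t) ⟨haI.1.le, haI.2⟩ hh
              exact Or.inr (Or.inl ⟨h0.symm, hta⟩)
            · rcases eq_or_lt_of_le s.2.2 with hsa | hsa
              · rw [hsa, hfa0] at hh
                have ht0 : (t:ℝ) = 0 := (mkC_eq_zero (hsubIco t)).mp hh
                exact Or.inr (Or.inr ⟨hsa, ht0⟩)
              · exfalso
                have hs := hswap1 (s:ℝ) ⟨h0, hsa⟩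
                have hmk : (((t:ℝ)):C1) = ((repC (f (((s:ℝ):C1))) : ℝ):C1) := by
                  rw [mk_repC]; exact hh
                have hteq : (t:ℝ) = repC (f (((s:ℝ):C1))) :=
                  mkC_inj (hsubIco t) (repC_mem _) hmk
                have : (t:ℝ) ≤ a := t.2.2
                rw [hteq] at this
                exact absurd this (not_le.mpr hs.1)
      have hf1fib : ∀ s t : ↥(Set.Icc (0:ℝ) a), (f1 s = f1 t) ↔
          (((s:ℝ) = (t:ℝ)) ∨ ((s:ℝ) = 0 ∧ (t:ℝ) = a) ∨ ((s:ℝ) = a ∧ (t:ℝ) = 0)) := by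
        intro s t
        constructor
        · intro hh
          have hh' : ((((s:ℝ)/a : ℝ)):C1) = ((((t:ℝ)/a : ℝ)):C1) := hh
          have h1 : ((((s:ℝ)/a - (t:ℝ)/a : ℝ)):C1) = 0 := by
            rw [show (((s:ℝ)/a - (t:ℝ)/a : ℝ)) = ((s:ℝ)/a) - ((t:ℝ)/a) from rfl,
              QuotientAddGroup.mk_sub, hh', sub_self]
          rw [AddCircle.coe_eq_zero_iff] at h1
          obtain ⟨n, hn⟩ := h1
          rw [zsmul_eq_mul, mul_one] at hn
          have hsa := s.2
          have hta := t.2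
          have hbound1 : (s:ℝ)/a - (t:ℝ)/a ≤ 1 := by
            rw [div_sub_div_same]
            rw [div_le_one haI.1]
            have := t.2.1
            have := s.2.2
            linarith
          have hbound2 : -1 ≤ (s:ℝ)/a - (t:ℝ)/a := by
            rw [div_sub_div_same]
            rw [le_div_iff₀ haI.1]
            have := t.2.2
            have := s.2.1
            linarith
          rw [← hn] at hbound1 hbound2
          have hn1 : n ≤ 1 := by exact_mod_cast hbound1
          have hn2 : -1 ≤ n := by exact_mod_cast hbound2
          interval_cases n
          · right; left
            have h2 : (s:ℝ)/a - (t:ℝ)/a = -1 := by rw [← hn]; norm_num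
            rw [div_sub_div_same, div_eq_iff ha0] at h2
            constructor
            · linarith [s.2.1, s.2.2, t.2.1, t.2.2]
            · linarith [s.2.1, s.2.2, t.2.1, t.2.2]
          · left
            have h2 : (s:ℝ)/a - (t:ℝ)/a = 0 := by rw [← hn]; norm_num
            rw [div_sub_div_same, div_eq_iff ha0, zero_mul, sub_eq_zero] at h2
            exact h2
          · right; right
            have h2 : (s:ℝ)/a - (t:ℝ)/a = 1 := by rw [← hn]; norm_num
            rw [div_sub_div_same, div_eq_iff ha0, one_mul] at h2
            constructor
            · linarith [s.2.1, s.2.2, t.2.1, t.2.2]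
            · linarith [s.2.1, s.2.2, t.2.1, t.2.2]
        · rintro (hh | ⟨hs0, hta⟩ | ⟨hsa, ht0⟩)
          · show ((((s:ℝ)/a : ℝ)):C1) = ((((t:ℝ)/a : ℝ)):C1)
            rw [hh]
          · show ((((s:ℝ)/a : ℝ)):C1) = ((((t:ℝ)/a : ℝ)):C1)
            rw [hs0, hta, zero_div, div_self ha0]
            rw [show (((0:ℝ)):C1) = (0:C1) by norm_num]
            exact (AddCircle.coe_period (p := (1:ℝ))).symm
          · show ((((s:ℝ)/a : ℝ)):C1) = ((((t:ℝ)/a : ℝ)):C1)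
            rw [hsa, ht0, div_self ha0, zero_div]
            rw [show (((0:ℝ)):C1) = (0:C1) by norm_num]
            exact AddCircle.coe_period (p := (1:ℝ))
      have hmatch : ∀ s t, f1 s = f1 t ↔ f2 s = f2 t := by
        intro s t
        rw [hf1fib s t, hf2fib s t]
        exact hdisj s t
      obtain ⟨E, hE⟩ := quotHomeo f1 f2 hf1c hf2c hf1surj hf2surj hmatch
      refine Or.inr ⟨⟨(hγcl.isCompact.image π.continuous).isClosed, ⟨E.symm⟩⟩, ?_, ?_⟩
      · rw [Set.disjoint_left]
        rintro z ⟨x, hx, rfl⟩ hzB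
        have hex : e.symm (e ⟨x, hx⟩) = ⟨x, hx⟩ := Homeomorph.symm_apply_apply _ _
        have := hnfixB (e ⟨x, hx⟩)
        rw [hex] at this
        exact this hzB
      · intro z hz
        apply (hcount z hz).2
        obtain ⟨x, hx, rfl⟩ := hz
        have hex : e.symm (e ⟨x, hx⟩) = ⟨x, hx⟩ := Homeomorph.symm_apply_apply _ _
        have := hnfixB (e ⟨x, hx⟩)
        rw [hex] at this
        exact this
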